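/- For a formal power series S(b) = Σ c_p b^p with radius-type bound |c_p| ≤ C·R^p·p! for some R > 1, the action on a convergent power series f(s) = Σ γ_q s^q defined by S(b)[f] = Σ_n (1/n!)·(Σ_{p=0}^n (n-p)!·c_p·γ_{n-p})·s^n produces a power series with positive radius of convergence. -/

import Mathlib

/-- For a power series `S(b) = Σ c_p b^p` with `|c_p| ≤ C·R^p·p!` (some `R > 1`),
its action `S(b)[f] = Σ_n (1/n!)(Σ_{p=0}^n (n-p)!·c_p·γ_{n-p}) s^n` on a
convergent power series `f(s) = Σ γ_q s^q` has positive radius of convergence. -/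
theorem stmt5 (c γ : ℕ → ℂ) (R C : ℝ) (hR : 1 < R) (hC : 0 < C)
    (hc : ∀ p : ℕ, ‖c p‖ ≤ C * R ^ p * p.factorial)
    (hγ : ∃ ρ : ℝ, 0 < ρ ∧ Summable fun q : ℕ => ‖γ q‖ * ρ ^ q) :
    ∃ r : ℝ, 0 < r ∧ Summable fun n : ℕ =>
      ‖(n.factorial : ℂ)⁻¹ *
        ∑ p ∈ Finset.range (n + 1), ((n - p).factorial : ℂ) * c p * γ (n - p)‖ * r ^ n := by
  obtain ⟨ρ, hρ, hs⟩ := hγ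
  have hR0 : (0 : ℝ) < R := lt_trans one_pos hR
  set ρ' : ℝ := min ρ 1 with hρ'def
  have hρ'0 : 0 < ρ' := lt_min hρ one_pos
  have hρ'1 : ρ' ≤ 1 := min_le_right _ _
  have hρ'ρ : ρ' ≤ ρ := min_le_left _ _
  set M : ℝ := ∑' q, ‖γ q‖ * ρ ^ q with hMdef
  have hM0 : 0 ≤ M := tsum_nonneg fun q => by positivity
  have hγb : ∀ q, ‖γ q‖ * ρ' ^ q ≤ M := by
    intro q
    calc ‖γ q‖ * ρ' ^ q ≤ ‖γ q‖ * ρ ^ q := by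
          gcongr
      _ ≤ M := hs.le_tsum q fun i _ => by positivity
  set r : ℝ := ρ' / (2 * R) with hrdef
  have hr0 : 0 < r := by positivity
  refine ⟨r, hr0, ?_⟩
  -- per-term bound inside the sum
  have hterm : ∀ n p, p ≤ n →
      ‖((n - p).factorial : ℂ) * c p * γ (n - p)‖ ≤
        (n.factorial : ℝ) * C * R ^ n * (M / ρ' ^ n) := by
    intro n p hp
    rw [norm_mul, norm_mul, Complex.norm_natCast]
    have h2 : ‖γ (n - p)‖ ≤ M / ρ' ^ (n - p) := by
      rw [le_div_iff₀ (by positivity)]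
      exact hγb (n - p)
    calc ((n - p).factorial : ℝ) * ‖c p‖ * ‖γ (n - p)‖
        ≤ ((n - p).factorial : ℝ) * (C * R ^ p * p.factorial) * (M / ρ' ^ (n - p)) := by
          gcongr
          exact hc p
      _ = (((p.factorial : ℝ)) * ((n - p).factorial)) * C * R ^ p * (M / ρ' ^ (n - p)) := by
          ring
      _ ≤ (n.factorial : ℝ) * C * R ^ n * (M / ρ' ^ n) := by
          have hfac : (p.factorial : ℝ) * ((n - p).factorial) ≤ (n.factorial : ℝ) := by
            have := Nat.choose_mul_factorial_mul_factorial hp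
            have hch : 1 ≤ n.choose p := Nat.one_le_iff_ne_zero.mpr
              (Nat.choose_pos hp).ne'
            have : p.factorial * (n - p).factorial ≤ n.factorial := by
              calc p.factorial * (n - p).factorial
                  ≤ n.choose p * p.factorial * (n - p).factorial := by
                    nlinarith [Nat.factorial_pos p, Nat.factorial_pos (n - p)]
                _ = n.factorial := Nat.choose_mul_factorial_mul_factorial hp
            exact_mod_cast this
          have hRp : R ^ p ≤ R ^ n := pow_le_pow_right₀ hR.le hp
          have hdiv : M / ρ' ^ (n - p) ≤ M / ρ' ^ n := by
            apply div_le_div_of_nonneg_left hM0 (by positivity)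
            exact pow_le_pow_of_le_one hρ'0.le hρ'1 (Nat.sub_le n p)
          gcongr
  have key : ∀ n : ℕ, ‖(n.factorial : ℂ)⁻¹ *
        ∑ p ∈ Finset.range (n + 1), ((n - p).factorial : ℂ) * c p * γ (n - p)‖ * r ^ n ≤
      C * M * (((n : ℝ) + 1) * (1 / 2 : ℝ) ^ n) := by
    intro n
    have hfacpos : (0 : ℝ) < n.factorial := by exact_mod_cast n.factorial_pos
    have hsum : ‖∑ p ∈ Finset.range (n + 1),
        ((n - p).factorial : ℂ) * c p * γ (n - p)‖ ≤
        ((n : ℝ) + 1) * ((n.factorial : ℝ) * C * R ^ n * (M / ρ' ^ n)) := by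
      calc ‖∑ p ∈ Finset.range (n + 1), ((n - p).factorial : ℂ) * c p * γ (n - p)‖
          ≤ ∑ p ∈ Finset.range (n + 1),
              ‖((n - p).factorial : ℂ) * c p * γ (n - p)‖ := by
            exact norm_sum_le _ _
        _ ≤ ∑ _p ∈ Finset.range (n + 1),
              (n.factorial : ℝ) * C * R ^ n * (M / ρ' ^ n) := by
            apply Finset.sum_le_sum
            intro p hp
            exact hterm n p (Nat.lt_succ_iff.mp (Finset.mem_range.mp hp))
        _ = ((n : ℝ) + 1) * ((n.factorial : ℝ) * C * R ^ n * (M / ρ' ^ n)) := by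
            rw [Finset.sum_const, Finset.card_range]
            push_cast; ring
    rw [norm_mul, norm_inv, Complex.norm_natCast]
    have h12 : R / ρ' * r = 1 / 2 := by
      rw [hrdef]; field_simp
    have hhalf : R ^ n / ρ' ^ n * r ^ n = (1 / 2 : ℝ) ^ n := by
      calc R ^ n / ρ' ^ n * r ^ n = (R / ρ' * r) ^ n := by rw [mul_pow, div_pow, div_pow]
        _ = (1 / 2 : ℝ) ^ n := by rw [h12]
    calc (n.factorial : ℝ)⁻¹ * ‖∑ p ∈ Finset.range (n + 1),
            ((n - p).factorial : ℂ) * c p * γ (n - p)‖ * r ^ n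
        ≤ (n.factorial : ℝ)⁻¹ * (((n : ℝ) + 1) *
            ((n.factorial : ℝ) * C * R ^ n * (M / ρ' ^ n))) * r ^ n := by
          gcongr
      _ = C * M * (((n : ℝ) + 1) * (R ^ n / ρ' ^ n * r ^ n)) := by
          field_simp
      _ = C * M * (((n : ℝ) + 1) * (1 / 2 : ℝ) ^ n) := by rw [hhalf]
  have hsummable : Summable fun n : ℕ => C * M * (((n : ℝ) + 1) * (1 / 2 : ℝ) ^ n) := by
    apply Summable.mul_left
    have h1 : Summable fun n : ℕ => (n : ℝ) ^ 1 * (1 / 2 : ℝ) ^ n :=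
      summable_pow_mul_geometric_of_norm_lt_one 1 (by norm_num)
    have h2 : Summable fun n : ℕ => (1 / 2 : ℝ) ^ n :=
      summable_geometric_of_lt_one (by norm_num) (by norm_num)
    have := h1.add h2
    convert this using 2 with n
    · rfl
    ring
  exact Summable.of_nonneg_of_le (fun n => by positivity) key hsummable
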